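/- (Remark 4, algebraic decay: C_N has a well-separated mode.) Fix constants γ > 0, c > 0 and σ > 0, and for each integer N ≥ 1 define C_N(L) = L σ²/N + c L^{−γ} for positive integers L. For each N let L_0^{(N)} be a minimizer of C_N over the positive integers (a minimizer exists). If (L_N) is any sequence of positive integers with lim_{N→∞} C_N(L_N)/C_N(L_0^{(N)}) = 1, then lim_{N→∞} L_N / L_0^{(N)} = 1. -/

import Mathlib

open Filter Set

lemma phi_mono (γ : ℝ) (hγ : 0 < γ) :
    StrictMonoOn (fun r : ℝ => γ * r + r ^ (-γ)) (Set.Ici 1) := by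
  apply strictMonoOn_of_deriv_pos (convex_Ici 1)
  · apply ContinuousOn.add (continuous_const.mul continuous_id).continuousOn
    intro x hx
    exact (Real.continuousAt_rpow_const x (-γ)
      (Or.inl (by simp at hx; positivity))).continuousWithinAt
  · intro x hx
    rw [interior_Ici] at hx
    have hx1 : (1:ℝ) < x := hx
    have hd : HasDerivAt (fun r : ℝ => γ * r + r ^ (-γ))
        (γ * 1 + (-γ) * x ^ (-γ - 1)) x := by
      exact ((hasDerivAt_id x).const_mul γ).add
        (Real.hasDerivAt_rpow_const (Or.inl (by positivity)))
    rw [hd.deriv]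
    have ht : x ^ (-γ - 1) < 1 :=
      Real.rpow_lt_one_of_one_lt_of_neg hx1 (by linarith)
    have ht0 : (0:ℝ) ≤ x ^ (-γ - 1) := Real.rpow_nonneg (by linarith) _
    nlinarith

lemma phi_anti (γ : ℝ) (hγ : 0 < γ) :
    StrictAntiOn (fun r : ℝ => γ * r + r ^ (-γ)) (Set.Ioc 0 1) := by
  apply strictAntiOn_of_deriv_neg (convex_Ioc 0 1)
  · apply ContinuousOn.add (continuous_const.mul continuous_id).continuousOn
    intro x hx
    exact (Real.continuousAt_rpow_const x (-γ)
      (Or.inl (ne_of_gt hx.1))).continuousWithinAt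
  · intro x hx
    rw [interior_Ioc] at hx
    have hd : HasDerivAt (fun r : ℝ => γ * r + r ^ (-γ))
        (γ * 1 + (-γ) * x ^ (-γ - 1)) x := by
      exact ((hasDerivAt_id x).const_mul γ).add
        (Real.hasDerivAt_rpow_const (Or.inl (ne_of_gt hx.1)))
    rw [hd.deriv]
    have ht : 1 < x ^ (-γ - 1) := by
      rw [Real.one_lt_rpow_iff_of_pos hx.1]
      exact Or.inr ⟨hx.2, by linarith⟩
    nlinarith

lemma phi_sep (γ : ℝ) (hγ : 0 < γ) (ε : ℝ) (hε : 0 < ε) (hε1 : ε < 1) :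
    ∃ η > 0, ∀ r > (0:ℝ), γ * r + r ^ (-γ) < (1 + γ) + η → |r - 1| < ε := by
  set f : ℝ → ℝ := fun r => γ * r + r ^ (-γ) with hf
  have hf1 : f 1 = γ + 1 := by simp [hf, Real.one_rpow]
  have h1 : f 1 < f (1 + ε) :=
    phi_mono γ hγ (by norm_num) (by simp; linarith) (by linarith)
  have h2 : f 1 < f (1 - ε) :=
    (phi_anti γ hγ) (by constructor <;> linarith) (by constructor <;> linarith) (by linarith)
  refine ⟨min (f (1 + ε)) (f (1 - ε)) - (γ + 1), by simp; constructor <;> linarith, ?_⟩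
  intro r hr h
  have h' : f r < min (f (1 + ε)) (f (1 - ε)) := by
    have := h; simp only [hf] at this ⊢; linarith
  rw [abs_lt]
  constructor
  · by_contra hcon
    push_neg at hcon
    have hrle : r ≤ 1 - ε := by linarith
    have : f (1 - ε) ≤ f r :=
      (phi_anti γ hγ).antitoneOn ⟨hr, hrle.trans (by linarith)⟩
        ⟨by linarith, by linarith⟩ hrle
    have := min_le_right (f (1+ε)) (f (1-ε))
    linarith
  · by_contra hcon
    push_neg at hcon
    have hrge : 1 + ε ≤ r := by linarith
    have : f (1 + ε) ≤ f r :=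
      (phi_mono γ hγ).monotoneOn (by simp; linarith) (by simp; linarith) hrge
    have := min_le_left (f (1+ε)) (f (1-ε))
    linarith

lemma key_identity (γ c : ℝ) (u x : ℝ) (hu : 0 < u) (hx : 0 < x) :
    x * (c * γ * u ^ (-(1+γ))) + c * x ^ (-γ)
      = c * u ^ (-γ) * (γ * (x/u) + (x/u) ^ (-γ)) := by
  have h1 : (x/u) ^ (-γ) = x ^ (-γ) / u ^ (-γ) := Real.div_rpow hx.le hu.le _
  have h2 : u ^ (-(1+γ)) = u ^ (-γ) / u := by
    rw [show -(1+γ) = -γ - 1 by ring, Real.rpow_sub hu, Real.rpow_one]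
  have h3 : u ^ (-γ) ≠ 0 := by positivity
  rw [h1, h2]
  field_simp

/-- Remark 4, algebraic decay: `C_N` has a well-separated mode.
With `C_N(L) = L σ²/N + c L^{-γ}`, if `L_0^{(N)}` minimizes `C_N` over the positive
integers and `(L_N)` is a sequence of positive integers with
`C_N(L_N)/C_N(L_0^{(N)}) → 1`, then `L_N / L_0^{(N)} → 1`. -/
theorem wellSeparatedMode_algebraic (γ c σ : ℝ) (hγ : 0 < γ) (hc : 0 < c) (hσ : 0 < σ)
    (C : ℕ → ℕ → ℝ)
    (hC : ∀ N L : ℕ, C N L = (L : ℝ) * σ ^ 2 / (N : ℝ) + c * (L : ℝ) ^ (-γ))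
    (L0 : ℕ → ℕ)
    (hL0 : ∀ N ≥ 1, 1 ≤ L0 N ∧ ∀ L ≥ 1, C N (L0 N) ≤ C N L)
    (LN : ℕ → ℕ) (hLN : ∀ N, 1 ≤ LN N)
    (hlim : Tendsto (fun N => C N (LN N) / C N (L0 N)) atTop (nhds 1)) :
    Tendsto (fun N => (LN N : ℝ) / (L0 N : ℝ)) atTop (nhds 1) := by
  set f : ℝ → ℝ := fun r => γ * r + r ^ (-γ) with hfdef
  set Ls : ℕ → ℝ := fun N => (c * γ * N / σ ^ 2) ^ ((1:ℝ)/(1+γ)) with hLsdef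
  have hγ1 : (0:ℝ) < 1 + γ := by linarith
  have hLs_pos : ∀ N : ℕ, 1 ≤ N → 0 < Ls N := by
    intro N hN
    have : (0:ℝ) < (N:ℝ) := by exact_mod_cast Nat.pos_of_ne_zero (by omega)
    positivity
  -- σ²/N = c γ (Ls N)^(-(1+γ))
  have hsig : ∀ N : ℕ, 1 ≤ N → σ ^ 2 / (N:ℝ) = c * γ * (Ls N) ^ (-(1+γ)) := by
    intro N hN
    have hN0 : (0:ℝ) < (N:ℝ) := by exact_mod_cast Nat.pos_of_ne_zero (by omega)
    have hbase : (0:ℝ) ≤ c * γ * N / σ ^ 2 := by positivity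
    have hpow : (Ls N) ^ ((1:ℝ)+γ) = c * γ * N / σ ^ 2 := by
      simp only [hLsdef]
      rw [← Real.rpow_mul hbase, one_div, inv_mul_cancel₀ hγ1.ne', Real.rpow_one]
    rw [Real.rpow_neg (hLs_pos N hN).le, hpow]
    field_simp
  -- C N L = c (Ls N)^(-γ) f(L / Ls N)
  have hkey : ∀ N : ℕ, 1 ≤ N → ∀ L : ℕ, 1 ≤ L →
      C N L = c * (Ls N) ^ (-γ) * f ((L:ℝ) / Ls N) := by
    intro N hN L hL
    have hLpos : (0:ℝ) < (L:ℝ) := by exact_mod_cast hL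
    rw [hC, mul_div_assoc, hsig N hN, key_identity γ c (Ls N) L (hLs_pos N hN) hLpos]
  -- f positive on positives
  have hfpos : ∀ r : ℝ, 0 < r → 0 < f r := by
    intro r hr
    have : 0 < r ^ (-γ) := Real.rpow_pos_of_pos hr _
    have : 0 < γ * r := by positivity
    simp only [hfdef]; linarith [Real.rpow_pos_of_pos hr (-γ)]
  have hCpos : ∀ N : ℕ, 1 ≤ N → ∀ L : ℕ, 1 ≤ L → 0 < C N L := by
    intro N hN L hL
    rw [hkey N hN L hL]
    have := hfpos _ (div_pos (Nat.cast_pos.mpr hL) (hLs_pos N hN))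
    have := hLs_pos N hN
    positivity
  -- Ls → ∞
  have hLs_top : Tendsto Ls atTop atTop := by
    have h1 : Tendsto (fun N : ℕ => c * γ * (N:ℝ) / σ ^ 2) atTop atTop := by
      apply Tendsto.atTop_div_const (by positivity)
      exact (tendsto_natCast_atTop_atTop).const_mul_atTop (by positivity)
    exact (tendsto_rpow_atTop (by positivity)).comp h1
  -- f(1 + 1/Ls N) → γ + 1
  have hinv : Tendsto (fun N => 1 + 1 / Ls N) atTop (nhds 1) := by
    have h := (tendsto_inv_atTop_zero).comp hLs_top
    have h2 := (tendsto_const_nhds : Tendsto (fun _ : ℕ => (1:ℝ)) atTop (nhds 1)).add h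
    simpa [one_div, Function.comp] using h2
  have hfc : ContinuousAt f 1 := by
    apply ContinuousAt.add
    · exact (continuous_const.mul continuous_id).continuousAt
    · exact Real.continuousAt_rpow_const 1 (-γ) (Or.inl one_ne_zero)
  have hftop : Tendsto (fun N => f (1 + 1 / Ls N)) atTop (nhds (γ + 1)) := by
    have := hfc.tendsto.comp hinv
    have hf1 : f 1 = γ + 1 := by simp [hfdef]
    rwa [hf1] at this
  -- bound: f(L0 N / Ls N) ≤ f(1 + 1/Ls N) for large N
  have hbound : ∀ N : ℕ, 1 ≤ N → f ((L0 N : ℝ) / Ls N) ≤ f (1 + 1 / Ls N) := by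
    intro N hN
    set u := Ls N with hu
    have hupos := hLs_pos N hN
    have hceil1 : 1 ≤ ⌈u⌉₊ := Nat.one_le_ceil_iff.mpr hupos
    have hmin := (hL0 N hN).2 ⌈u⌉₊ hceil1
    have e0 := hkey N hN (L0 N) (hL0 N hN).1
    have ec := hkey N hN ⌈u⌉₊ hceil1
    rw [e0, ec] at hmin
    have hd : 0 < c * u ^ (-γ) := by positivity
    have h1 : f ((L0 N : ℝ) / u) ≤ f ((⌈u⌉₊ : ℝ) / u) :=
      le_of_mul_le_mul_left (by linarith [hmin]) hd
    have h2 : f ((⌈u⌉₊ : ℝ) / u) ≤ f (1 + 1 / u) := by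
      apply (phi_mono γ hγ).monotoneOn
      · exact mem_Ici.mpr ((one_le_div hupos).mpr (Nat.le_ceil u))
      · exact mem_Ici.mpr (by nlinarith [one_div_pos.mpr hupos])
      · have h3 := (Nat.ceil_lt_add_one hupos.le).le
        have h4 : (1/u) * u = 1 := by field_simp; exact div_self hupos.ne'
        rw [div_le_iff₀ hupos]
        nlinarith
    exact h1.trans h2
  -- f(LN N / Ls N) = q N * f(L0 N / Ls N)
  have hratio : ∀ N : ℕ, 1 ≤ N →
      f ((LN N : ℝ) / Ls N) = (C N (LN N) / C N (L0 N)) * f ((L0 N : ℝ) / Ls N) := by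
    intro N hN
    have e0 := hkey N hN (L0 N) (hL0 N hN).1
    have eL := hkey N hN (LN N) (hLN N)
    have h0 : C N (L0 N) ≠ 0 := (hCpos N hN (L0 N) (hL0 N hN).1).ne'
    have hd : 0 < c * (Ls N) ^ (-γ) := by
      have := hLs_pos N hN; positivity
    have hF0 : f ((L0 N : ℝ) / Ls N) ≠ 0 := by
      apply (hfpos _ (div_pos _ (hLs_pos N hN))).ne'
      exact_mod_cast (hL0 N hN).1
    rw [eL, e0, mul_div_mul_left _ _ hd.ne', div_mul_cancel₀ _ hF0]
  -- convergence of L0/Ls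
  have claim0 : Tendsto (fun N => (L0 N : ℝ) / Ls N) atTop (nhds 1) := by
    rw [Metric.tendsto_nhds]
    intro ε hε
    obtain ⟨η, hη, hsep⟩ := phi_sep γ hγ (min ε (1/2)) (by positivity) (by
      calc min ε (1/2) ≤ 1/2 := min_le_right _ _
      _ < 1 := by norm_num)
    have hevf : ∀ᶠ N in atTop, f (1 + 1 / Ls N) < (1 + γ) + η := by
      apply hftop.eventually_lt_const; linarith
    filter_upwards [hevf, eventually_ge_atTop 1] with N h1 hN
    have hr0pos : (0:ℝ) < (L0 N : ℝ) / Ls N := by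
      apply div_pos _ (hLs_pos N hN)
      exact_mod_cast (hL0 N hN).1
    have := hsep _ hr0pos (by
      have := hbound N hN
      simp only [hfdef] at this h1 ⊢
      linarith)
    rw [Real.dist_eq]
    exact this.trans_le (min_le_left _ _)
  have claimL : Tendsto (fun N => (LN N : ℝ) / Ls N) atTop (nhds 1) := by
    rw [Metric.tendsto_nhds]
    intro ε hε
    obtain ⟨η, hη, hsep⟩ := phi_sep γ hγ (min ε (1/2)) (by positivity) (by
      calc min ε (1/2) ≤ 1/2 := min_le_right _ _
      _ < 1 := by norm_num)
    have hmul : Tendsto (fun N => (C N (LN N) / C N (L0 N)) * f (1 + 1 / Ls N))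
        atTop (nhds (γ + 1)) := by
      have := hlim.mul hftop
      simpa using this
    have hevf : ∀ᶠ N in atTop, (C N (LN N) / C N (L0 N)) * f (1 + 1 / Ls N) < (1 + γ) + η := by
      apply hmul.eventually_lt_const; linarith
    filter_upwards [hevf, eventually_ge_atTop 1] with N h1 hN
    have hrLpos : (0:ℝ) < (LN N : ℝ) / Ls N := by
      apply div_pos _ (hLs_pos N hN)
      exact_mod_cast hLN N
    have hqnn : 0 ≤ C N (LN N) / C N (L0 N) :=
      (div_pos (hCpos N hN (LN N) (hLN N)) (hCpos N hN (L0 N) (hL0 N hN).1)).le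
    have hle : f ((LN N : ℝ) / Ls N) ≤ (C N (LN N) / C N (L0 N)) * f (1 + 1 / Ls N) := by
      rw [hratio N hN]
      exact mul_le_mul_of_nonneg_left (hbound N hN) hqnn
    have := hsep _ hrLpos (by
      simp only [hfdef] at hle h1 ⊢
      linarith)
    rw [Real.dist_eq]
    exact this.trans_le (min_le_left _ _)
  -- combine
  have hdiv := claimL.div claim0 one_ne_zero
  simp only [div_one] at hdiv
  apply hdiv.congr'
  filter_upwards [eventually_ge_atTop 1] with N hN
  have hu := (hLs_pos N hN).ne'
  have hL00 : ((L0 N : ℝ)) ≠ 0 := by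
    have h : (0:ℝ) < (L0 N : ℝ) := by exact_mod_cast (hL0 N hN).1
    exact h.ne'
  simp only [Pi.div_apply]
  field_simp
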